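/- For every non-negative integer j ≥ 1, ∫₀¹ arctan(t)·Ti_{2j}(t)/t dt = (1/2) Σ_{k=1}^{2j-1} (-1)^{k-1} β(k+1) β(2j-k+1), where Ti_m is the inverse tangent integral and β is the Dirichlet beta function. -/

import Mathlib

open Real Finset

/-- Inverse tangent integral `Ti_m(t) = ∑_{n=1}^∞ (-1)^{n-1} t^{2n-1}/(2n-1)^m`. -/
noncomputable def Ti (m : ℕ) (t : ℝ) : ℝ := ∑' n : ℕ, (-1)^n * t^(2*n+1) / ((2*(n:ℝ)+1))^m

/-- Dirichlet beta function `β(s) = ∑_{n=1}^∞ (-1)^{n-1}/(2n-1)^s`. -/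
noncomputable def dbeta (s : ℕ) : ℝ := ∑' n : ℕ, (-1)^n / ((2*(n:ℝ)+1))^s

set_option maxHeartbeats 1000000

open MeasureTheory

lemma summable_sq : Summable (fun n : ℕ => ((2*(n:ℝ)+1)^2)⁻¹) := by
  have h : Summable (fun n : ℕ => (((n:ℝ)+1)^2)⁻¹) := by
    have := (summable_nat_add_iff (f := fun n : ℕ => (1:ℝ)/(n:ℝ)^2) 1).2
      ((Real.summable_one_div_nat_pow (p := 2)).2 one_lt_two)
    simpa [one_div] using this
  apply h.of_nonneg_of_le (fun n => by positivity) (fun n => ?_)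
  apply inv_anti₀ (by positivity)
  have : (0:ℝ) ≤ n := Nat.cast_nonneg n
  nlinarith


lemma summable_pow_le {s : ℕ} (hs : 2 ≤ s) :
    Summable (fun n : ℕ => ((2*(n:ℝ)+1)^s)⁻¹) := by
  apply summable_sq.of_nonneg_of_le (fun n => by positivity) (fun n => ?_)
  apply inv_anti₀ (by positivity)
  exact pow_le_pow_right₀ (by linarith [Nat.cast_nonneg (α := ℝ) n]) hs


lemma dbeta_summable {s : ℕ} (hs : 2 ≤ s) :
    Summable (fun n : ℕ => ((-1:ℝ))^n / ((2*(n:ℝ)+1))^s) := by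
  apply (summable_pow_le hs).of_norm_bounded
  intro n
  rw [norm_div, norm_pow, norm_neg, norm_one, one_pow, one_div,
    norm_pow, Real.norm_of_nonneg (by positivity)]


lemma keySummable (j : ℕ) (hj : 1 ≤ j) :
    Summable (fun p : ℕ × ℕ =>
      ((2*(p.1:ℝ)+1) * (2*(p.2:ℝ)+1)^(2*j) * (2*(p.1:ℝ)+2*(p.2:ℝ)+2))⁻¹) := by
  apply Summable.of_nonneg_of_le (fun p => by positivity) (fun p => ?_)
    (summable_sq.mul_of_nonneg summable_sq (fun n => by positivity) (fun n => by positivity))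
  obtain ⟨n, m⟩ := p
  simp only
  rw [← mul_inv]
  apply inv_anti₀ (by positivity)
  have h1 : (2*(m:ℝ)+1)^2 ≤ (2*(m:ℝ)+1)^(2*j) :=
    pow_le_pow_right₀ (by linarith [Nat.cast_nonneg (α := ℝ) m]) (by omega)
  have h2 : (2*(n:ℝ)+1) ≤ 2*(n:ℝ)+2*(m:ℝ)+2 := by linarith [Nat.cast_nonneg (α := ℝ) m]
  have hn0 : (0:ℝ) < 2*(n:ℝ)+1 := by positivity
  calc (2*(n:ℝ)+1)^2 * (2*(m:ℝ)+1)^2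
      ≤ (2*(n:ℝ)+1)^2 * (2*(m:ℝ)+1)^(2*j) := by gcongr
    _ ≤ ((2*(n:ℝ)+1) * (2*(n:ℝ)+2*(m:ℝ)+2)) * (2*(m:ℝ)+1)^(2*j) := by
        rw [sq]; gcongr
    _ = (2*(n:ℝ)+1) * (2*(m:ℝ)+1)^(2*j) * (2*(n:ℝ)+2*(m:ℝ)+2) := by ring


lemma telescope (j : ℕ) (hj : 1 ≤ j) (A B : ℝ) (hA : 0 < A) (hB : 0 < B) :
    ∑ k ∈ Finset.Icc 1 (2*j-1), (-1:ℝ)^(k-1) / (A^(k+1) * B^(2*j-k+1))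
      = (1/(A*B^(2*j)) + 1/(A^(2*j)*B)) / (A+B) := by
  set d : ℕ → ℝ := fun i => (-1)^i/(A^(i+1)*B^(2*j-i)) with hd
  have key : ∑ k ∈ Finset.Icc 1 (2*j-1), (-1:ℝ)^(k-1) / (A^(k+1) * B^(2*j-k+1))
      = ∑ i ∈ Finset.range (2*j-1), (d i - d (i+1)) / (A+B) := by
    have hIcc : Finset.Icc 1 (2*j-1) = Finset.Ico 1 (2*j) := by
      ext x; simp [Finset.mem_Icc, Finset.mem_Ico]; omega
    rw [hIcc, Finset.sum_Ico_eq_sum_range]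
    apply Finset.sum_congr (by congr 1)
    intro i hi
    rw [Finset.mem_range] at hi
    have h1 : 1 + i - 1 = i := by omega
    have h2 : 1 + i + 1 = i + 2 := by omega
    obtain ⟨e, he⟩ : ∃ e, 2*j - i - 1 = e := ⟨_, rfl⟩
    have h3 : 2*j - (1+i) + 1 = e + 1 := by omega
    have h4 : 2*j - i = e + 1 := by omega
    have h5 : 2*j - (i+1) = e := by omega
    simp only [hd]
    rw [h1, h2, h3, h4, h5]
    have hAB : (0:ℝ) < A + B := by linarith
    field_simp
    ring
  rw [key, ← Finset.sum_div, Finset.sum_range_sub']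
  have hodd : Odd (2*j-1) := ⟨j-1, by omega⟩
  have h6 : 2*j - (2*j-1) = 1 := by omega
  have h7 : 2*j - 1 + 1 = 2*j := by omega
  rw [hd]
  simp only [Nat.sub_zero, pow_zero, h6, h7, hodd.neg_one_pow, pow_one]
  field_simp
  ring


noncomputable def Hfun (j : ℕ) (p : ℕ × ℕ) : ℝ :=
  (-1)^(p.1+p.2) * ((2*(p.1:ℝ)+1) * (2*(p.2:ℝ)+1)^(2*j) * (2*(p.1:ℝ)+2*(p.2:ℝ)+2))⁻¹


lemma norm_Hfun (j : ℕ) (p : ℕ × ℕ) : ‖Hfun j p‖ =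
    ((2*(p.1:ℝ)+1) * (2*(p.2:ℝ)+1)^(2*j) * (2*(p.1:ℝ)+2*(p.2:ℝ)+2))⁻¹ := by
  rw [Hfun, norm_mul, norm_pow, norm_neg, norm_one, one_pow, one_mul,
    Real.norm_of_nonneg (by positivity)]


lemma Hfun_summable (j : ℕ) (hj : 1 ≤ j) : Summable (Hfun j) := by
  apply Summable.of_norm_bounded (keySummable j hj)
  intro p; rw [norm_Hfun]


lemma Hfun_swap_summable (j : ℕ) (hj : 1 ≤ j) : Summable (fun p : ℕ × ℕ => Hfun j p.swap) :=
  ((Equiv.prodComm ℕ ℕ).summable_iff.2 (Hfun_summable j hj))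


lemma rhs_eq (j : ℕ) (hj : 1 ≤ j) :
    (1/2) * ∑ k ∈ Finset.Icc 1 (2*j-1), (-1:ℝ)^(k-1) * dbeta (k+1) * dbeta (2*j-k+1)
      = ∑' p : ℕ × ℕ, Hfun j p := by
  have summ : ∀ k ∈ Finset.Icc 1 (2*j-1), Summable (fun p : ℕ × ℕ =>
      (-1:ℝ)^(k-1) * ((-1)^p.1 / (2*(p.1:ℝ)+1)^(k+1)
        * ((-1)^p.2 / (2*(p.2:ℝ)+1)^(2*j-k+1)))) := by
    intro k hk
    rw [Finset.mem_Icc] at hk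
    have h1 : Summable (fun n : ℕ => ‖((-1:ℝ))^n / ((2*(n:ℝ)+1))^(k+1)‖) :=
      (dbeta_summable (by omega)).abs
    have h2 : Summable (fun n : ℕ => ‖((-1:ℝ))^n / ((2*(n:ℝ)+1))^(2*j-k+1)‖) :=
      (dbeta_summable (by omega)).abs
    exact ((h1.mul_norm h2).of_norm).mul_left _
  have step1 : ∀ k ∈ Finset.Icc 1 (2*j-1),
      (-1:ℝ)^(k-1) * dbeta (k+1) * dbeta (2*j-k+1)
        = ∑' p : ℕ × ℕ, (-1:ℝ)^(k-1) *
            ((-1)^p.1 / (2*(p.1:ℝ)+1)^(k+1) * ((-1)^p.2 / (2*(p.2:ℝ)+1)^(2*j-k+1))) := by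
    intro k hk
    rw [Finset.mem_Icc] at hk
    have h1 : Summable (fun n : ℕ => ‖((-1:ℝ))^n / ((2*(n:ℝ)+1))^(k+1)‖) :=
      (dbeta_summable (by omega)).abs
    have h2 : Summable (fun n : ℕ => ‖((-1:ℝ))^n / ((2*(n:ℝ)+1))^(2*j-k+1)‖) :=
      (dbeta_summable (by omega)).abs
    have hmul : Summable (fun p : ℕ × ℕ =>
        (-1:ℝ)^p.1 / (2*(p.1:ℝ)+1)^(k+1) * ((-1)^p.2 / (2*(p.2:ℝ)+1)^(2*j-k+1))) :=
      (h1.mul_norm h2).of_norm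
    have hprod := ((dbeta_summable (s := k+1) (by omega)).hasSum.mul
      (dbeta_summable (s := 2*j-k+1) (by omega)).hasSum hmul).tsum_eq
    rw [mul_assoc, show dbeta (k+1) * dbeta (2*j-k+1) = _ from hprod.symm, ← tsum_mul_left]
  rw [Finset.sum_congr rfl step1, ← Summable.tsum_finsetSum summ]
  have ptwise : ∀ p : ℕ × ℕ,
      ∑ k ∈ Finset.Icc 1 (2*j-1), (-1:ℝ)^(k-1) *
          ((-1)^p.1 / (2*(p.1:ℝ)+1)^(k+1) * ((-1)^p.2 / (2*(p.2:ℝ)+1)^(2*j-k+1)))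
        = Hfun j p + Hfun j p.swap := by
    intro p
    obtain ⟨n, m⟩ := p
    set A : ℝ := 2*(n:ℝ)+1 with hA
    set B : ℝ := 2*(m:ℝ)+1 with hB
    have hA0 : 0 < A := by positivity
    have hB0 : 0 < B := by positivity
    have : ∀ k ∈ Finset.Icc 1 (2*j-1), (-1:ℝ)^(k-1) *
          ((-1)^n / A^(k+1) * ((-1)^m / B^(2*j-k+1)))
        = ((-1:ℝ)^(n+m)) * ((-1:ℝ)^(k-1) / (A^(k+1) * B^(2*j-k+1))) := by
      intro k _
      rw [pow_add]
      field_simp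
      ring
    rw [Finset.sum_congr rfl this, ← Finset.mul_sum, telescope j hj A B hA0 hB0]
    have hswap : (Hfun j (n, m).swap) =
        (-1:ℝ)^(n+m) * (B * A^(2*j) * (A+B))⁻¹ := by
      rw [Hfun]
      simp only [Prod.swap_prod_mk]
      rw [add_comm (m:ℕ) n]
      congr 1
      rw [hA, hB]; ring_nf
    have hH : (Hfun j (n, m)) = (-1:ℝ)^(n+m) * (A * B^(2*j) * (A+B))⁻¹ := by
      rw [Hfun]
      congr 1
      rw [hA, hB]; ring_nf
    rw [hH, hswap]
    have hAB : (0:ℝ) < A + B := by linarith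
    field_simp
  rw [tsum_congr ptwise, Summable.tsum_add (Hfun_summable j hj) (Hfun_swap_summable j hj)]
  have : ∑' p : ℕ × ℕ, Hfun j p.swap = ∑' p : ℕ × ℕ, Hfun j p :=
    (Equiv.prodComm ℕ ℕ).tsum_eq (Hfun j)
  rw [this]
  ring


lemma pointwise_hasSum (j : ℕ) (t : ℝ) (h0 : 0 < t) (h1 : t < 1) :
    HasSum (fun p : ℕ × ℕ => ((-1:ℝ)^p.1 * t^(2*p.1+1) / (2*(p.1:ℝ)+1))
        * ((-1)^p.2 * t^(2*p.2) / (2*(p.2:ℝ)+1)^(2*j)))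
      (Real.arctan t * (Ti (2*j) t / t)) := by
  have ht2 : t^2 < 1 := by nlinarith
  have hgeo : Summable (fun m : ℕ => (t^2)^m) :=
    summable_geometric_of_lt_one (by positivity) ht2
  have hf_norm : Summable (fun n : ℕ => ‖(-1:ℝ)^n * t^(2*n+1) / (2*(n:ℝ)+1)‖) := by
    apply hgeo.of_nonneg_of_le (fun n => norm_nonneg _) (fun n => ?_)
    rw [norm_div, norm_mul, norm_pow, norm_neg, norm_one, one_pow, one_mul, norm_pow,
      Real.norm_of_nonneg h0.le, Real.norm_of_nonneg (by positivity), ← pow_mul]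
    have hle : t^(2*n+1) ≤ t^(2*n) := by
      rw [pow_succ]
      nlinarith [pow_nonneg h0.le (2*n), pow_le_one₀ h0.le h1.le (n := 2*n)]
    calc t^(2*n+1) / (2*(n:ℝ)+1) ≤ t^(2*n+1) / 1 := by
          apply div_le_div_of_nonneg_left (by positivity) one_pos ?_ |>.trans_eq rfl
          linarith [Nat.cast_nonneg (α := ℝ) n]
      _ = t^(2*n+1) := div_one _
      _ ≤ t^(2*n) := hle
  have hg_norm : Summable (fun m : ℕ => ‖(-1:ℝ)^m * t^(2*m) / (2*(m:ℝ)+1)^(2*j)‖) := by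
    apply hgeo.of_nonneg_of_le (fun m => norm_nonneg _) (fun m => ?_)
    rw [norm_div, norm_mul, norm_pow, norm_neg, norm_one, one_pow, one_mul, norm_pow,
      Real.norm_of_nonneg h0.le, Real.norm_of_nonneg (by positivity), ← pow_mul]
    have h1d : (1:ℝ) ≤ (2*(m:ℝ)+1)^(2*j) :=
      one_le_pow₀ (by linarith [Nat.cast_nonneg (α := ℝ) m])
    calc t^(2*m) / (2*(m:ℝ)+1)^(2*j) ≤ t^(2*m) / 1 :=
          div_le_div_of_nonneg_left (by positivity) one_pos h1d |>.trans_eq rfl |>.trans (le_refl _)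
      _ = t^(2*m) := div_one _
  have harc : HasSum (fun n : ℕ => (-1:ℝ)^n * t^(2*n+1) / (2*(n:ℝ)+1)) (Real.arctan t) := by
    have ht : ‖t‖ < 1 := by rw [Real.norm_of_nonneg h0.le]; exact h1
    have := Real.hasSum_arctan ht
    convert this using 2 with n
    push_cast
    ring
  have hg : HasSum (fun m : ℕ => (-1:ℝ)^m * t^(2*m) / (2*(m:ℝ)+1)^(2*j))
      (∑' m : ℕ, (-1:ℝ)^m * t^(2*m) / (2*(m:ℝ)+1)^(2*j)) := hg_norm.of_norm.hasSum
  have hTi : Ti (2*j) t = t * ∑' m : ℕ, (-1:ℝ)^m * t^(2*m) / (2*(m:ℝ)+1)^(2*j) := by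
    rw [Ti]
    have := (hg.mul_left t).tsum_eq
    rw [← this]
    apply tsum_congr
    intro m
    ring
  have hdiv : Ti (2*j) t / t = ∑' m : ℕ, (-1:ℝ)^m * t^(2*m) / (2*(m:ℝ)+1)^(2*j) := by
    rw [hTi, mul_comm, mul_div_assoc, div_self h0.ne', mul_one]
  rw [hdiv]
  exact harc.mul hg (hf_norm.mul_norm hg_norm).of_norm


noncomputable def Ffun (j : ℕ) (p : ℕ × ℕ) (x : ℝ) : ℝ :=
  (-1)^(p.1+p.2) * ((2*(p.1:ℝ)+1) * (2*(p.2:ℝ)+1)^(2*j))⁻¹ * x^(2*p.1+2*p.2+1)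


lemma hpow_int (N : ℕ) : ∫ x in Set.Ioo (0:ℝ) 1, x^N = ((N:ℝ)+1)⁻¹ := by
  rw [← integral_Ioc_eq_integral_Ioo, ← intervalIntegral.integral_of_le zero_le_one,
    integral_pow]
  rw [one_pow, zero_pow (by omega), sub_zero, one_div]


lemma lhs_eq (j : ℕ) (hj : 1 ≤ j) :
    ∫ t in (0:ℝ)..1, Real.arctan t * Ti (2*j) t / t = ∑' p : ℕ × ℕ, Hfun j p := by
  have hcont : ∀ p : ℕ × ℕ, Continuous (Ffun j p) :=
    fun p => continuous_const.mul (continuous_pow _)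
  have hInt : ∀ p : ℕ × ℕ, IntegrableOn (Ffun j p) (Set.Ioo 0 1) volume := fun p =>
    (((hcont p).integrableOn_Icc (a := 0) (b := 1))).mono_set Set.Ioo_subset_Icc_self
  have hval : ∀ p : ℕ × ℕ, ∫ x in Set.Ioo (0:ℝ) 1, Ffun j p x = Hfun j p := by
    intro p
    simp only [Ffun]
    rw [MeasureTheory.integral_const_mul, hpow_int, Hfun]
    have h1 : (2*(p.1:ℝ)+1) ≠ 0 := by positivity
    have h2 : ((2*(p.2:ℝ)+1):ℝ)^(2*j) ≠ 0 := by positivity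
    have h3 : ((2*(p.1:ℕ)+2*(p.2:ℕ)+1 : ℕ):ℝ) + 1 = 2*(p.1:ℝ)+2*(p.2:ℝ)+2 := by
      push_cast; ring
    rw [h3]
    have h4 : (2*(p.1:ℝ)+2*(p.2:ℝ)+2) ≠ 0 := by positivity
    field_simp
  have hnorm : ∀ p : ℕ × ℕ, ∫ x in Set.Ioo (0:ℝ) 1, ‖Ffun j p x‖
      = ((2*(p.1:ℝ)+1) * (2*(p.2:ℝ)+1)^(2*j) * (2*(p.1:ℝ)+2*(p.2:ℝ)+2))⁻¹ := by
    intro p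
    have hcg : ∀ x ∈ Set.Ioo (0:ℝ) 1, ‖Ffun j p x‖
        = ((2*(p.1:ℝ)+1) * (2*(p.2:ℝ)+1)^(2*j))⁻¹ * x^(2*p.1+2*p.2+1) := by
      intro x hx
      rw [Ffun, norm_mul, norm_mul, norm_pow, norm_neg, norm_one, one_pow, one_mul,
        Real.norm_of_nonneg (by positivity), norm_pow, Real.norm_of_nonneg hx.1.le]
    rw [setIntegral_congr_fun measurableSet_Ioo hcg, MeasureTheory.integral_const_mul,
      hpow_int]
    have h3 : ((2*(p.1:ℕ)+2*(p.2:ℕ)+1 : ℕ):ℝ) + 1 = 2*(p.1:ℝ)+2*(p.2:ℝ)+2 := by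
      push_cast; ring
    rw [h3, ← mul_inv]
  have hsum_norm : Summable (fun p : ℕ × ℕ => ∫ x in Set.Ioo (0:ℝ) 1, ‖Ffun j p x‖) :=
    (keySummable j hj).congr (fun p => (hnorm p).symm)
  have key : ∑' p : ℕ × ℕ, ∫ x in Set.Ioo (0:ℝ) 1, Ffun j p x
      = ∫ x in Set.Ioo (0:ℝ) 1, ∑' p : ℕ × ℕ, Ffun j p x :=
    integral_tsum_of_summable_integral_norm hInt hsum_norm
  have hptw : ∀ x ∈ Set.Ioo (0:ℝ) 1,
      Real.arctan x * Ti (2*j) x / x = ∑' p : ℕ × ℕ, Ffun j p x := by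
    intro x hx
    rw [mul_div_assoc, ← (pointwise_hasSum j x hx.1 hx.2).tsum_eq]
    apply tsum_congr
    intro p
    rw [Ffun]
    have h1 : (2*(p.1:ℝ)+1) ≠ 0 := by positivity
    have h2 : ((2*(p.2:ℝ)+1):ℝ)^(2*j) ≠ 0 := by positivity
    rw [pow_add, pow_add]
    field_simp
    ring
  rw [intervalIntegral.integral_of_le zero_le_one, integral_Ioc_eq_integral_Ioo,
    setIntegral_congr_fun measurableSet_Ioo hptw, ← key]
  exact tsum_congr hval

theorem stmt_5 (j : ℕ) (hj : 1 ≤ j) :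
    ∫ t in (0:ℝ)..1, Real.arctan t * Ti (2*j) t / t =
      (1/2) * ∑ k ∈ Finset.Icc 1 (2*j-1), (-1)^(k-1) * dbeta (k+1) * dbeta (2*j-k+1) := by
  rw [lhs_eq j hj, ← rhs_eq j hj]
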